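/- Let q ≥ 3, let G = Z_2 * Z_q = ⟨S⟩ * ⟨R⟩ with S of order 2 and R of order q, and let r > 1 be an odd divisor of q. Then the power subgroup G^r generated by all r-th powers has index exactly r in G, and G/G^r is cyclic of order r. -/

import Mathlib

/-- The Hecke group `G_q`, abstractly: the free product `Z_2 * Z_q`. -/
def Hecke (q : ℕ) : Type := Monoid.Coprod (Multiplicative (ZMod 2)) (Multiplicative (ZMod q))

instance (q : ℕ) : Group (Hecke q) :=
  inferInstanceAs (Group (Monoid.Coprod (Multiplicative (ZMod 2)) (Multiplicative (ZMod q))))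

theorem stmt_7_aux (q r : ℕ) (hq : 3 ≤ q) (hr : r ∣ q) (hr1 : 1 < r) (hrodd : Odd r) :
    (Subgroup.closure {x : Monoid.Coprod (Multiplicative (ZMod 2)) (Multiplicative (ZMod q)) |
        ∃ y, x = y ^ r}).index = r ∧
    ∃ φ : Monoid.Coprod (Multiplicative (ZMod 2)) (Multiplicative (ZMod q)) →*
        Multiplicative (ZMod r), Function.Surjective φ ∧
      φ.ker = Subgroup.closure {x : Monoid.Coprod (Multiplicative (ZMod 2))
        (Multiplicative (ZMod q)) | ∃ y, x = y ^ r} := by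
  set G := Monoid.Coprod (Multiplicative (ZMod 2)) (Multiplicative (ZMod q)) with hG
  have hr0 : r ≠ 0 := by omega
  haveI : NeZero r := ⟨hr0⟩
  haveI : NeZero q := ⟨by omega⟩
  set N := Subgroup.closure {x : G | ∃ y, x = y ^ r} with hNdef
  -- the homomorphism φ
  let f : Multiplicative (ZMod q) →* Multiplicative (ZMod r) :=
    AddMonoidHom.toMultiplicative (ZMod.castHom hr (ZMod r)).toAddMonoidHom
  let φ : G →* Multiplicative (ZMod r) :=
    Monoid.Coprod.lift (1 : Multiplicative (ZMod 2) →* Multiplicative (ZMod r)) f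
  have hφsurj : Function.Surjective φ := by
    intro z
    obtain ⟨n, hn⟩ := ZMod.natCast_zmod_surjective (Multiplicative.toAdd z)
    refine ⟨Monoid.Coprod.inr (Multiplicative.ofAdd ((n : ZMod q))), ?_⟩
    have h1 : φ (Monoid.Coprod.inr (Multiplicative.ofAdd ((n : ZMod q)))) =
        Multiplicative.ofAdd ((n : ZMod r)) := by
      show (Monoid.Coprod.lift (1 : Multiplicative (ZMod 2) →* Multiplicative (ZMod r))
          (AddMonoidHom.toMultiplicative (ZMod.castHom hr (ZMod r)).toAddMonoidHom))
          (Monoid.Coprod.inr (Multiplicative.ofAdd ((n : ZMod q)))) = _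
      rw [Monoid.Coprod.lift_apply_inr]
      show Multiplicative.ofAdd ((ZMod.castHom hr (ZMod r)) ((n : ZMod q))) = _
      rw [map_natCast]
    rw [h1, hn, ofAdd_toAdd]
  -- every r-th power is in ker φ
  have hpow1 : ∀ a : Multiplicative (ZMod r), a ^ r = 1 := by
    intro a
    rw [← toAdd_eq_zero, toAdd_pow, nsmul_eq_mul, ZMod.natCast_self, zero_mul]
  have hNle : N ≤ φ.ker := by
    rw [hNdef, Subgroup.closure_le]
    rintro x ⟨y, rfl⟩
    simp only [SetLike.mem_coe, MonoidHom.mem_ker, map_pow]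
    exact hpow1 _
  -- N is normal
  have key : ∀ x ∈ N, ∀ g : G, g * x * g⁻¹ ∈ N := by
    intro x hx
    induction hx using Subgroup.closure_induction with
    | mem y hy =>
      intro g
      obtain ⟨z, rfl⟩ := hy
      exact Subgroup.subset_closure ⟨g * z * g⁻¹, by rw [conj_pow]⟩
    | one => intro g; simpa using N.one_mem
    | mul a b _ _ iha ihb =>
      intro g
      have h2 : g * (a * b) * g⁻¹ = (g * a * g⁻¹) * (g * b * g⁻¹) := by
        simp only [mul_assoc]
        exact congrArg (g * ·) (congrArg (a * ·) (inv_mul_cancel_left g (b * g⁻¹)).symm)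
      rw [h2]; exact mul_mem (iha g) (ihb g)
    | inv a _ iha =>
      intro g
      have h2 : g * a⁻¹ * g⁻¹ = (g * a * g⁻¹)⁻¹ := by
        simp only [mul_inv_rev, inv_inv, mul_assoc]
        exact congrArg (· * (a⁻¹ * g⁻¹)) (inv_inv g).symm
      rw [h2]; exact inv_mem (iha g)
  haveI hNnorm : N.Normal := ⟨fun n hn g => key n hn g⟩
  -- generators
  set S : G := Monoid.Coprod.inl (Multiplicative.ofAdd (1 : ZMod 2)) with hSdef
  set R : G := Monoid.Coprod.inr (Multiplicative.ofAdd (1 : ZMod q)) with hRdef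
  have hS2 : S ^ 2 = 1 := by
    have h2 : (1 + 1 : ZMod 2) = 0 := by decide
    rw [hSdef, ← map_pow, pow_two, ← ofAdd_add, h2, ofAdd_zero, map_one]
  have hSr : S ^ r = S := by
    obtain ⟨m, hm⟩ := hrodd
    rw [hm, pow_add, pow_mul, hS2, one_pow, pow_one, one_mul]
  have hSmem : S ∈ N := Subgroup.subset_closure ⟨S, hSr.symm⟩
  have hRr : R ^ r ∈ N := Subgroup.subset_closure ⟨R, rfl⟩
  -- the quotient is generated by the image of R
  let π := QuotientGroup.mk' N
  have hπS : π S = 1 := (QuotientGroup.eq_one_iff S).mpr hSmem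
  have htop' : ∀ g : G, π g ∈ Subgroup.zpowers (π R) := by
    intro g
    induction g using Monoid.Coprod.induction_on with
    | inl m =>
      have hm2 : (Multiplicative.ofAdd (1 : ZMod 2)) ^ (Multiplicative.toAdd m).val = m := by
        rw [← ofAdd_nsmul, nsmul_eq_mul, mul_one, ZMod.natCast_rightInverse _]
        exact ofAdd_toAdd m
      have hm3 : Monoid.Coprod.inl m = S ^ (Multiplicative.toAdd m).val := by
        rw [hSdef, ← map_pow, hm2]
      rw [hm3, map_pow, hπS, one_pow]; exact one_mem _
    | inr n =>
      have hn2 : (Multiplicative.ofAdd (1 : ZMod q)) ^ (Multiplicative.toAdd n).val = n := by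
        rw [← ofAdd_nsmul, nsmul_eq_mul, mul_one, ZMod.natCast_rightInverse _]
        exact ofAdd_toAdd n
      have hn3 : Monoid.Coprod.inr n = R ^ (Multiplicative.toAdd n).val := by
        rw [hRdef, ← map_pow, hn2]
      rw [hn3, map_pow]
      exact pow_mem (Subgroup.mem_zpowers _) _
    | mul a b iha ihb =>
      rw [map_mul]
      exact mul_mem iha ihb
  have htop : Subgroup.zpowers (π R) = ⊤ := by
    rw [eq_top_iff]
    rintro x -
    obtain ⟨g, rfl⟩ := QuotientGroup.mk'_surjective N x
    exact htop' g
  -- N.index divides r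
  have hπRr : (π R) ^ r = 1 := by
    rw [← map_pow]; exact (QuotientGroup.eq_one_iff _).mpr hRr
  have hord : orderOf (π R) ∣ r := orderOf_dvd_of_pow_eq_one hπRr
  have hNidx_eq : N.index = orderOf (π R) := by
    rw [Subgroup.index_eq_card, ← Nat.card_zpowers, htop]
    exact Subgroup.card_top.symm
  have hNdvd : N.index ∣ r := hNidx_eq ▸ hord
  -- ker φ has index r
  have hker_idx : φ.ker.index = r := by
    rw [Subgroup.index_ker]
    have hrange : φ.range = ⊤ := MonoidHom.range_eq_top.mpr hφsurj
    rw [hrange, Subgroup.card_top, Nat.card_congr Multiplicative.toAdd, Nat.card_zmod]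
  -- so N.index = r
  have hrdvd : r ∣ N.index := hker_idx ▸ Subgroup.index_dvd_of_le hNle
  have hNidx : N.index = r := Nat.dvd_antisymm hNdvd hrdvd
  -- and ker φ = N
  have hrel : N.relIndex φ.ker * φ.ker.index = N.index := Subgroup.relIndex_mul_index hNle
  rw [hker_idx, hNidx] at hrel
  have hrel1 : N.relIndex φ.ker = 1 := by
    have hpos : 0 < r := by omega
    exact Nat.eq_of_mul_eq_mul_right hpos (by rw [one_mul]; exact hrel)
  have hle2 : φ.ker ≤ N := Subgroup.relIndex_eq_one.mp hrel1
  exact ⟨hNidx, φ, hφsurj, le_antisymm hle2 hNle⟩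

/-- Proposition 5.6: for an odd divisor `r > 1` of `q`, the power subgroup `G^r` of
`G_q = Z_2 * Z_q` has index exactly `r`, and the quotient is cyclic of order `r`
(expressed via a surjection onto `Z_r` with kernel `G^r`). -/
theorem stmt_7 (q r : ℕ) (hq : 3 ≤ q) (hr : r ∣ q) (hr1 : 1 < r) (hrodd : Odd r) :
    (Subgroup.closure {x : Hecke q | ∃ y, x = y ^ r}).index = r ∧
    ∃ φ : Hecke q →* Multiplicative (ZMod r), Function.Surjective φ ∧
      φ.ker = Subgroup.closure {x : Hecke q | ∃ y, x = y ^ r} := by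
  exact stmt_7_aux q r hq hr hr1 hrodd
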